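/- In a locally cartesian closed category E, the composite of two polynomial functors is naturally isomorphic to a polynomial functor: given polynomial spans I ←s E' →p A →t J and J ←u F →q B →v K, there exists a polynomial span I ←s' R →p' D →t' K whose associated polynomial functor E/I → E/K is naturally isomorphic to the composite of the polynomial functors associated to the two given spans. -/

import Mathlib

open CategoryTheory CategoryTheory.Limits

universe v u

section Aux


variable {E : Type u} [Category.{v} E] [HasFiniteLimits E]

theorem lift_fst_any {W X Y Z : E} {f : X ⟶ Z} {g : Y ⟶ Z} (i1 i2 : HasPullback f g)
    (a : W ⟶ X) (b : W ⟶ Y) (w : a ≫ f = b ≫ g) {V : E} (r : X ⟶ V) :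
    @pullback.lift E _ W X Y Z f g i1 a b w ≫ @pullback.fst E _ X Y Z f g i2 ≫ r = a ≫ r := by
  obtain rfl : i1 = i2 := Subsingleton.elim _ _
  exact pullback.lift_fst_assoc _ _ _ _

theorem lift_snd_any {W X Y Z : E} {f : X ⟶ Z} {g : Y ⟶ Z} (i1 i2 : HasPullback f g)
    (a : W ⟶ X) (b : W ⟶ Y) (w : a ≫ f = b ≫ g) {V : E} (r : Y ⟶ V) :
    @pullback.lift E _ W X Y Z f g i1 a b w ≫ @pullback.snd E _ X Y Z f g i2 ≫ r = b ≫ r := by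
  obtain rfl : i1 = i2 := Subsingleton.elim _ _
  exact pullback.lift_snd_assoc _ _ _ _

theorem lift_fst_any' {W X Y Z : E} {f : X ⟶ Z} {g : Y ⟶ Z} (i1 i2 : HasPullback f g)
    (a : W ⟶ X) (b : W ⟶ Y) (w : a ≫ f = b ≫ g) :
    @pullback.lift E _ W X Y Z f g i1 a b w ≫ @pullback.fst E _ X Y Z f g i2 = a := by
  obtain rfl : i1 = i2 := Subsingleton.elim _ _
  exact pullback.lift_fst _ _ _

theorem lift_snd_any' {W X Y Z : E} {f : X ⟶ Z} {g : Y ⟶ Z} (i1 i2 : HasPullback f g)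
    (a : W ⟶ X) (b : W ⟶ Y) (w : a ≫ f = b ≫ g) :
    @pullback.lift E _ W X Y Z f g i1 a b w ≫ @pullback.snd E _ X Y Z f g i2 = b := by
  obtain rfl : i1 = i2 := Subsingleton.elim _ _
  exact pullback.lift_snd _ _ _

/-- Concrete Beck–Chevalley: for `h : X ⟶ Z`, `k : Y ⟶ Z`,
`Over.map h ⋙ Over.pullback k ≅ Over.pullback (pullback.fst h k) ⋙ Over.map (pullback.snd h k)`. -/
noncomputable def bcConcrete {X Y Z : E} (h : X ⟶ Z) (k : Y ⟶ Z) :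
    Over.map h ⋙ Over.pullback k ≅
      Over.pullback (pullback.fst h k) ⋙ Over.map (pullback.snd h k) :=
  NatIso.ofComponents
    (fun T => Over.isoMk (pullbackRightPullbackFstIso h k T.hom).symm (by simp))
    (fun {T T'} f => by
      ext
      dsimp
      ext <;> simp <;> simp only [lift_fst_any, lift_snd_any, lift_fst_any', lift_snd_any'] <;> simp)

variable (pb : ∀ {X Y : E}, (X ⟶ Y) → (Over Y ⥤ Over X))
  (adj₁ : ∀ {X Y : E} (w : X ⟶ Y), Over.map w ⊣ pb w)
  (pf : ∀ {X Y : E}, (X ⟶ Y) → (Over X ⥤ Over Y))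
  (adj₂ : ∀ {X Y : E} (w : X ⟶ Y), pb w ⊣ pf w)

noncomputable def pbIso {X Y : E} (w : X ⟶ Y) : pb w ≅ Over.pullback w :=
  Adjunction.rightAdjointUniq (adj₁ w) (Over.mapPullbackAdj w)

noncomputable def pbComp {X Y Z : E} (f : X ⟶ Y) (g : Y ⟶ Z) :
    pb (f ≫ g) ≅ pb g ⋙ pb f :=
  conjugateIsoEquiv (adj₁ (f ≫ g)) ((adj₁ f).comp (adj₁ g)) (Over.mapComp f g).symm

noncomputable def pfComp {X Y Z : E} (f : X ⟶ Y) (g : Y ⟶ Z) :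
    pf (f ≫ g) ≅ pf f ⋙ pf g :=
  conjugateIsoEquiv (adj₂ (f ≫ g)) ((adj₂ g).comp (adj₂ f)) (pbComp pb adj₁ f g).symm

noncomputable def bc {X Y Z : E} (h : X ⟶ Z) (k : Y ⟶ Z) :
    Over.map h ⋙ pb k ≅ pb (pullback.fst h k) ⋙ Over.map (pullback.snd h k) :=
  Functor.isoWhiskerLeft _ (pbIso pb adj₁ k) ≪≫ bcConcrete h k ≪≫
    Functor.isoWhiskerRight (pbIso pb adj₁ (pullback.fst h k)).symm _

noncomputable def bcMate {X Y Z : E} (h : X ⟶ Z) (k : Y ⟶ Z) :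
    pf h ⋙ pb k ≅ pb (pullback.snd k h) ⋙ pf (pullback.fst k h) :=
  conjugateIsoEquiv ((adj₁ k).comp (adj₂ h))
    ((adj₂ (pullback.fst k h)).comp (adj₁ (pullback.snd k h)))
    (bc pb adj₁ k h).symm

/-- Slice a right adjoint: for `adj : F ⊣ G` and `c`, `Over.post G : Over c ⥤ Over (G.obj c)`
has left adjoint `Over.post F ⋙ Over.map (adj.counit.app c)`. -/
noncomputable def postAdjunction {C : Type*} {D : Type*} [Category C] [Category D]
    {F : C ⥤ D} {G : D ⥤ C} (adj : F ⊣ G) (c : D) :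
    Over.post F ⋙ Over.map (adj.counit.app c) ⊣ Over.post (X := c) G :=
  Adjunction.mkOfHomEquiv
    { homEquiv := fun d x =>
        { toFun := fun u => Over.homMk (adj.homEquiv _ _ u.left) (by
            have hu := Over.w u
            dsimp at hu ⊢
            have key : ∀ (w : F.obj d.left ⟶ x.left), w ≫ x.hom = F.map d.hom ≫ adj.counit.app c →
                adj.homEquiv _ _ w ≫ G.map x.hom = d.hom := by
              intro w hw
              rw [← adj.homEquiv_naturality_right, hw, adj.homEquiv_naturality_left]
              simp [Adjunction.homEquiv_unit]
            exact key u.left hu)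
          invFun := fun v => Over.homMk ((adj.homEquiv _ _).symm v.left) (by
            have hv := Over.w v
            dsimp at hv ⊢
            have key : ∀ (w : d.left ⟶ G.obj x.left), w ≫ G.map x.hom = d.hom →
                (adj.homEquiv _ _).symm w ≫ x.hom = F.map d.hom ≫ adj.counit.app c := by
              intro w hw
              rw [← adj.homEquiv_naturality_right_symm, hw, adj.homEquiv_counit]
              rfl
            exact key v.left hv)
          left_inv := fun u => by ext; exact (adj.homEquiv _ _).symm_apply_apply _
          right_inv := fun v => by ext; exact (adj.homEquiv _ _).apply_symm_apply _ }
      homEquiv_naturality_left_symm := fun f g => by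
        ext; exact adj.homEquiv_naturality_left_symm _ _
      homEquiv_naturality_right := fun f g => by
        ext; exact adj.homEquiv_naturality_right _ _ }

section SliceLemmas

variable {C : Type*} [Category C]

lemma post_forget {D : Type*} [Category D] (F : C ⥤ D) (c : C) :
    Over.post F ⋙ Over.forget (F.obj c) = Over.forget c ⋙ F := rfl

lemma backward_forget {X : C} (f : Over X) :
    Over.iteratedSliceBackward f ⋙ Over.forget f = Over.map f.hom := rfl

lemma forward_map_eq {X : C} {a b : Over X} (θ : a ⟶ b) :
    Over.map θ ⋙ Over.iteratedSliceForward b =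
      Over.iteratedSliceForward a ⋙ Over.map θ.left := rfl

noncomputable def forwardMapIso {X : C} (f : Over X) :
    Over.iteratedSliceForward f ⋙ Over.map f.hom ≅ Over.forget f :=
  NatIso.ofComponents (fun α => Over.isoMk (Iso.refl _) (by
    change 𝟙 _ ≫ α.left.hom = α.hom.left ≫ f.hom
    simp [Over.w α.hom])) (fun _ => by ext; exact (Category.comp_id _).trans (Category.id_comp _).symm)

noncomputable def backPostForwardIso {X Y : C} (c : Over X) (q : X ⟶ Y) :
    Over.iteratedSliceBackward c ⋙ Over.post (Over.map q) ⋙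
      Over.iteratedSliceForward ((Over.map q).obj c) ≅ 𝟭 (Over c.left) :=
  NatIso.ofComponents (fun α => Over.isoMk (Iso.refl _) (by
    change 𝟙 _ ≫ α.hom = α.hom
    simp)) (fun _ => by ext; exact (Category.comp_id _).trans (Category.id_comp _).symm)

end SliceLemmas

section Distrib

variable {Fc Bc M : E} (q : Fc ⟶ Bc) (h : M ⟶ Fc)

/-- The functor `Over M ⥤ Over D` given by slicing `pf q`. -/
noncomputable def Phi : Over M ⥤ Over ((pf q).obj (Over.mk h)).left :=
  Over.iteratedSliceBackward (Over.mk h) ⋙ Over.post (pf q) ⋙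
    Over.iteratedSliceForward ((pf q).obj (Over.mk h))

/-- `Φ ⋙ Over.map g ≅ Over.map h ⋙ pf q`. -/
noncomputable def PhiMapIso :
    Phi pf q h ⋙ Over.map ((pf q).obj (Over.mk h)).hom ≅ Over.map h ⋙ pf q :=
  Functor.isoWhiskerLeft (Over.iteratedSliceBackward (Over.mk h) ⋙ Over.post (pf q))
      (forwardMapIso ((pf q).obj (Over.mk h))) ≪≫
    (Iso.refl _ : Over.iteratedSliceBackward (Over.mk h) ⋙ Over.post (pf q) ⋙
        Over.forget ((pf q).obj (Over.mk h)) ≅ Over.map h ⋙ pf q)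

/-- Left adjoint data: adjunction for `Phi`. -/
noncomputable def PhiAdj :
    (Over.iteratedSliceBackward ((pf q).obj (Over.mk h)) ⋙
      (Over.post (pb q) ⋙ Over.map ((adj₂ q).counit.app (Over.mk h))) ⋙
        Over.iteratedSliceForward (Over.mk h)) ⊣ Phi pf q h :=
  (((pf q).obj (Over.mk h)).iteratedSliceEquiv.symm.toAdjunction.comp
    ((postAdjunction (adj₂ q) (Over.mk h)).comp
      (Over.mk h).iteratedSliceEquiv.toAdjunction))

/-- The counit map `e : P' ⟶ M`. -/
noncomputable def distribE : ((pb q).obj ((pf q).obj (Over.mk h))).left ⟶ M :=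
  ((adj₂ q).counit.app (Over.mk h)).left

/-- The map `q' : P' ⟶ D`. -/
noncomputable def distribQ' :
    ((pb q).obj ((pf q).obj (Over.mk h))).left ⟶ ((pf q).obj (Over.mk h)).left :=
  ((adj₁ q).counit.app ((pf q).obj (Over.mk h))).left

/-- The sliced pullback functor `Ψ`. -/
noncomputable def Psi :
    Over ((pf q).obj (Over.mk h)).left ⥤ Over ((pb q).obj ((pf q).obj (Over.mk h))).left :=
  Over.iteratedSliceBackward ((pf q).obj (Over.mk h)) ⋙ Over.post (pb q) ⋙
    Over.iteratedSliceForward ((pb q).obj ((pf q).obj (Over.mk h)))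

noncomputable def PsiAdj :
    (Over.iteratedSliceBackward ((pb q).obj ((pf q).obj (Over.mk h))) ⋙
      (Over.post (Over.map q) ⋙ Over.map ((adj₁ q).counit.app ((pf q).obj (Over.mk h)))) ⋙
        Over.iteratedSliceForward ((pf q).obj (Over.mk h))) ⊣ Psi pb pf q h :=
  (((pb q).obj ((pf q).obj (Over.mk h))).iteratedSliceEquiv.symm.toAdjunction.comp
    ((postAdjunction (adj₁ q) ((pf q).obj (Over.mk h))).comp
      ((pf q).obj (Over.mk h)).iteratedSliceEquiv.toAdjunction))

noncomputable def LPsiIso :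
    (Over.iteratedSliceBackward ((pb q).obj ((pf q).obj (Over.mk h))) ⋙
      (Over.post (Over.map q) ⋙ Over.map ((adj₁ q).counit.app ((pf q).obj (Over.mk h)))) ⋙
        Over.iteratedSliceForward ((pf q).obj (Over.mk h))) ≅
      Over.map (distribQ' pb adj₁ pf q h) :=
  Functor.isoWhiskerRight (backPostForwardIso ((pb q).obj ((pf q).obj (Over.mk h))) q)
      (Over.map (distribQ' pb adj₁ pf q h)) ≪≫
    Functor.leftUnitor _

noncomputable def PsiIso : pb (distribQ' pb adj₁ pf q h) ≅ Psi pb pf q h :=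
  Adjunction.rightAdjointUniq (adj₁ _)
    ((PsiAdj pb adj₁ pf q h).ofNatIsoLeft (LPsiIso pb adj₁ pf q h))

noncomputable def isoB :
    Phi pf q h ≅ pb (distribE pb pf adj₂ q h) ⋙ pf (distribQ' pb adj₁ pf q h) :=
  conjugateIsoEquiv (PhiAdj pb pf adj₂ q h)
    ((adj₂ (distribQ' pb adj₁ pf q h)).comp (adj₁ (distribE pb pf adj₂ q h)))
    (Functor.isoWhiskerRight (PsiIso pb adj₁ pf q h) (Over.map (distribE pb pf adj₂ q h)))

/-- Distributivity: `Over.map h ⋙ pf q ≅ pb e ⋙ pf q' ⋙ Over.map g`. -/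
noncomputable def distribIso :
    Over.map h ⋙ pf q ≅
      pb (distribE pb pf adj₂ q h) ⋙ pf (distribQ' pb adj₁ pf q h) ⋙
        Over.map ((pf q).obj (Over.mk h)).hom :=
  (PhiMapIso pf q h).symm ≪≫
    Functor.isoWhiskerRight (isoB pb adj₁ pf adj₂ q h) (Over.map ((pf q).obj (Over.mk h)).hom)

end Distrib

include adj₁ adj₂ in
theorem polynomial_comp' {I A J B K E' F : E}
    (s : E' ⟶ I) (p : E' ⟶ A) (t : A ⟶ J)
    (u : F ⟶ J) (q : F ⟶ B) (v : B ⟶ K) :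
    ∃ (R D : E) (s' : R ⟶ I) (p' : R ⟶ D) (t' : D ⟶ K),
      Nonempty (((pb s ⋙ pf p ⋙ Over.map t) ⋙ (pb u ⋙ pf q ⋙ Over.map v)) ≅
        pb s' ⋙ pf p' ⋙ Over.map t') := by
  -- the intermediate pullbacks
  let k : pullback t u ⟶ A := pullback.fst t u
  let h : pullback t u ⟶ F := pullback.snd t u
  let ut : pullback k p ⟶ E' := pullback.snd k p
  let pbar : pullback k p ⟶ pullback t u := pullback.fst k p
  let e := distribE pb pf adj₂ q h
  let q' := distribQ' pb adj₁ pf q h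
  let g := ((pf q).obj (Over.mk h)).hom
  let e' : pullback e pbar ⟶ pullback k p := pullback.snd e pbar
  let p'' : pullback e pbar ⟶ _ := pullback.fst e pbar
  refine ⟨pullback e pbar, ((pf q).obj (Over.mk h)).left,
    e' ≫ ut ≫ s, p'' ≫ q', g ≫ v, ⟨?_⟩⟩
  have step1 : Over.map t ⋙ pb u ≅ pb k ⋙ Over.map h := bc pb adj₁ t u
  have step2 : pf p ⋙ pb k ≅ pb ut ⋙ pf pbar := bcMate pb adj₁ pf adj₂ p k
  have step3 : Over.map h ⋙ pf q ≅ pb e ⋙ pf q' ⋙ Over.map g :=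
    distribIso pb adj₁ pf adj₂ q h
  have step4 : pf pbar ⋙ pb e ≅ pb e' ⋙ pf p'' := bcMate pb adj₁ pf adj₂ pbar e
  have pbTriple : pb (e' ≫ ut ≫ s) ≅ (pb s ⋙ pb ut) ⋙ pb e' :=
    pbComp pb adj₁ e' (ut ≫ s) ≪≫ Functor.isoWhiskerRight (pbComp pb adj₁ ut s) (pb e')
  have pfPart : pf (p'' ≫ q') ≅ pf p'' ⋙ pf q' := pfComp pb adj₁ pf adj₂ p'' q'
  have i1 : ((pb s ⋙ pf p ⋙ Over.map t) ⋙ (pb u ⋙ pf q ⋙ Over.map v)) ≅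
      pb s ⋙ pf p ⋙ (pb k ⋙ Over.map h) ⋙ pf q ⋙ Over.map v :=
    Functor.isoWhiskerLeft (pb s) (Functor.isoWhiskerLeft (pf p)
      (Functor.isoWhiskerRight step1 (pf q ⋙ Over.map v)))
  have i2 : (pb s ⋙ pf p ⋙ (pb k ⋙ Over.map h) ⋙ pf q ⋙ Over.map v) ≅
      pb s ⋙ (pb ut ⋙ pf pbar) ⋙ Over.map h ⋙ pf q ⋙ Over.map v :=
    Functor.isoWhiskerLeft (pb s) (Functor.isoWhiskerRight step2 (Over.map h ⋙ pf q ⋙ Over.map v))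
  have i3 : (pb s ⋙ (pb ut ⋙ pf pbar) ⋙ Over.map h ⋙ pf q ⋙ Over.map v) ≅
      pb s ⋙ pb ut ⋙ pf pbar ⋙ (pb e ⋙ pf q' ⋙ Over.map g) ⋙ Over.map v :=
    Functor.isoWhiskerLeft (pb s) (Functor.isoWhiskerLeft (pb ut) (Functor.isoWhiskerLeft (pf pbar)
      (Functor.isoWhiskerRight step3 (Over.map v))))
  have i4 : (pb s ⋙ pb ut ⋙ pf pbar ⋙ (pb e ⋙ pf q' ⋙ Over.map g) ⋙ Over.map v) ≅
      pb s ⋙ pb ut ⋙ (pb e' ⋙ pf p'') ⋙ pf q' ⋙ Over.map g ⋙ Over.map v :=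
    Functor.isoWhiskerLeft (pb s) (Functor.isoWhiskerLeft (pb ut)
      (Functor.isoWhiskerRight step4 (pf q' ⋙ Over.map g ⋙ Over.map v)))
  have j1 : (pb (e' ≫ ut ≫ s) ⋙ pf (p'' ≫ q') ⋙ Over.map (g ≫ v)) ≅
      (pb s ⋙ pb ut ⋙ pb e') ⋙ (pf p'' ⋙ pf q') ⋙ (Over.map g ⋙ Over.map v) :=
    Functor.isoWhiskerRight pbTriple (pf (p'' ≫ q') ⋙ Over.map (g ≫ v)) ≪≫
      Functor.isoWhiskerLeft (pb s ⋙ pb ut ⋙ pb e')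
        (Functor.isoWhiskerRight pfPart (Over.map (g ≫ v)) ≪≫
          Functor.isoWhiskerLeft (pf p'' ⋙ pf q') (Over.mapComp g v))
  exact i1 ≪≫ i2 ≪≫ i3 ≪≫ i4 ≪≫ j1.symm

end Aux

/-- In a locally cartesian closed category (local cartesian closedness
witnessed by base change functors `pb w ⊣ pf w`, with `pb w` right adjoint to the
postcomposition functor `Over.map w`), the composite of the polynomial functors
associated to two polynomial spans `I ←s E' →p A →t J` and `J ←u F →q B →v K` is
naturally isomorphic to the polynomial functor of a polynomial span
`I ←s' R →p' D →t' K`. -/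
theorem polynomial_comp {E : Type u} [Category.{v} E] [HasFiniteLimits E]
    (pb : ∀ {X Y : E}, (X ⟶ Y) → (Over Y ⥤ Over X))
    (adj₁ : ∀ {X Y : E} (w : X ⟶ Y), Over.map w ⊣ pb w)
    (pf : ∀ {X Y : E}, (X ⟶ Y) → (Over X ⥤ Over Y))
    (adj₂ : ∀ {X Y : E} (w : X ⟶ Y), pb w ⊣ pf w)
    {I A J B K E' F : E}
    (s : E' ⟶ I) (p : E' ⟶ A) (t : A ⟶ J)
    (u : F ⟶ J) (q : F ⟶ B) (v : B ⟶ K) :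
    ∃ (R D : E) (s' : R ⟶ I) (p' : R ⟶ D) (t' : D ⟶ K),
      Nonempty (((pb s ⋙ pf p ⋙ Over.map t) ⋙ (pb u ⋙ pf q ⋙ Over.map v)) ≅
        pb s' ⋙ pf p' ⋙ Over.map t') :=
  polynomial_comp' pb adj₁ pf adj₂ s p t u q v
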